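/- Let x ∈ V^⊕n with x¹ ≠ 0 and x² ≠ 0, and y ∈ V^⊕n such that xⁱ⊗yʲ = yⁱ⊗xʲ in V⊗V for all i ≠ j. Then there exist scalars λ, μ, not both zero, with λx = μy. -/
import Mathlib


open TensorProduct

/-- If `x ∈ V^⊕n` (`n ≥ 2`) has `x¹ ≠ 0` and `x² ≠ 0`, and `y ∈ V^⊕n`
satisfies `xⁱ⊗yʲ = yⁱ⊗xʲ` in `V⊗V` for all `i ≠ j`, then `x` and `y` are
proportional: there are scalars `λ, μ`, not both zero, with `λx = μy`. -/
theorem tensor_symmetry_implies_proportional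
    {V : Type*} [AddCommGroup V] [Module ℚ V] {n : ℕ} (hn : 2 ≤ n)
    (x y : Fin n → V)
    (hx1 : x ⟨0, by omega⟩ ≠ 0) (hx2 : x ⟨1, by omega⟩ ≠ 0)
    (hsym : ∀ i j : Fin n, i ≠ j → x i ⊗ₜ[ℚ] y j = y i ⊗ₜ[ℚ] x j) :
    ∃ l m : ℚ, ¬(l = 0 ∧ m = 0) ∧ ∀ i : Fin n, l • x i = m • y i := by
  classical
  set i0 : Fin n := ⟨0, by omega⟩ with hi0
  set i1 : Fin n := ⟨1, by omega⟩ with hi1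
  have hne : i0 ≠ i1 := by simp [hi0, hi1, Fin.ext_iff]
  have key : ∀ (f : Module.Dual ℚ V) (i j : Fin n), i ≠ j →
      f (x i) • y j = f (y i) • x j := by
    intro f i j hij
    have := congrArg (TensorProduct.lift ((LinearMap.lsmul ℚ V).comp f)) (hsym i j hij)
    simpa using this
  obtain ⟨f, hf⟩ : ∃ f : Module.Dual ℚ V, f (x i0) ≠ 0 := by
    by_contra h
    push_neg at h
    exact hx1 ((Module.forall_dual_apply_eq_zero_iff ℚ _).mp h)
  obtain ⟨g, hg⟩ : ∃ g : Module.Dual ℚ V, g (x i1) ≠ 0 := by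
    by_contra h
    push_neg at h
    exact hx2 ((Module.forall_dual_apply_eq_zero_iff ℚ _).mp h)
  set a := f (x i0) with ha
  set b := f (y i0) with hb
  set c := g (x i1) with hc
  set d := g (y i1) with hd
  have h0 : c • y i0 = d • x i0 := key g i1 i0 (Ne.symm hne)
  have had : a * d = b * c := by
    have h := congrArg g (key f i0 i1 hne)
    simpa [map_smul, smul_eq_mul, ha, hb, hc, hd] using h
  refine ⟨b, a, fun h => hf h.2, fun j => ?_⟩
  by_cases hj : j = i0
  · subst hj
    have hcc : c • (a • y i0) = c • (b • x i0) := by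
      rw [smul_comm, h0, smul_smul, smul_smul, had, mul_comm b c]
    have := smul_right_injective V hg hcc
    exact this.symm
  · exact (key f i0 j (fun h => hj h.symm)).symm
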